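/- There exists an instance of the batch loading and scheduling problem such that first solving a minimum-cardinality bin packing per family (i.e., batching the jobs of each family into the fewest feasible batches) and then optimally sequencing the resulting batches yields a schedule with strictly larger total weighted completion time than the optimum. In particular, for the instance with families A = {jobs 1,2,3,4} and B = {jobs 5,6}, unit processing times, weights (20,20,11,10,10,20), sizes (1,1,3,3,2,2), and capacity V = 4, every schedule whose family-A batching uses the minimum number of batches (two batches) has objective at least 181, whereas the optimum is 173. -/

import Mathlib

set_option maxRecDepth 100000

/-- Weights of the six jobs (jobs 1,…,6 are indexed 0,…,5). -/
def wt : Fin 6 → ℕ := ![20, 20, 11, 10, 10, 20]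

/-- Sizes of the six jobs. -/
def sz : Fin 6 → ℕ := ![1, 1, 3, 3, 2, 2]

/-- Families: jobs 1–4 are family A (`0`), jobs 5–6 are family B (`1`). -/
def fm : Fin 6 → Fin 2 := ![0, 0, 0, 0, 1, 1]

/-- A feasible schedule: a sequence of batches partitioning the six jobs, each
batch containing jobs of a single family with total size at most `4`. -/
def Feasible (bs : List (Finset (Fin 6))) : Prop :=
  (∀ i : Fin 6, ∃! k : Fin bs.length, i ∈ bs.get k) ∧
  (∀ b ∈ bs, ∀ i ∈ b, ∀ j ∈ b, fm i = fm j) ∧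
  (∀ b ∈ bs, ∑ i ∈ b, sz i ≤ 4)

/-- Total weighted completion time: with unit processing times the `k`-th batch
completes at time `k + 1`. -/
def obj (bs : List (Finset (Fin 6))) : ℕ :=
  ∑ k : Fin bs.length, (k.1 + 1) * ∑ i ∈ bs.get k, wt i

/-- The number of batches of the schedule containing family-A jobs. -/
def countA (bs : List (Finset (Fin 6))) : ℕ :=
  (bs.filter fun b => decide (∃ i ∈ b, fm i = 0)).length

/- ### Auxiliary lemmas -/

lemma Bwt' : ∀ b : Finset (Fin 6), (∀ i ∈ b, fm i ≠ 0) → ∑ i ∈ b, wt i ≤ 30 := by decide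

lemma BBwt : ∀ b c : Finset (Fin 6), Disjoint b c → (∀ i ∈ b, fm i ≠ 0) → (∀ i ∈ c, fm i ≠ 0) →
    ∑ i ∈ b, wt i + ∑ i ∈ c, wt i ≤ 30 := by decide

lemma Apair : ∀ b c : Finset (Fin 6), Disjoint b c → (∀ i ∈ b, fm i = 0) → (∀ i ∈ c, fm i = 0) →
    (∀ i : Fin 6, fm i = 0 → i ∈ b ∪ c) → ∑ i ∈ b, sz i ≤ 4 → ∑ i ∈ c, sz i ≤ 4 →
    ∑ i ∈ b, wt i ≤ 31 ∧ ∑ i ∈ c, wt i ≤ 31 ∧ ∑ i ∈ b, wt i + ∑ i ∈ c, wt i ≤ 61 := by decide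

lemma bigA : ∀ b : Finset (Fin 6), 0 ∈ b → 1 ∈ b → 2 ∈ b → 3 ∈ b → ¬ (∑ i ∈ b, sz i ≤ 4) := by
  decide

lemma length_filter_card {α : Type*} (l : List α) (p : α → Bool) :
    (l.filter p).length = (Finset.univ.filter fun k : Fin l.length => p (l.get k)).card := by
  induction l with
  | nil => simp
  | cons a t ih =>
    rw [List.filter_cons]
    simp only [Finset.card_filter, List.length_cons] at *
    rw [Fin.sum_univ_succ]
    by_cases h : p a <;> simp [h, ih] <;> omega

lemma countA_eq (bs : List (Finset (Fin 6))) :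
    countA bs
      = (Finset.univ.filter fun k : Fin bs.length => ∃ i ∈ bs.get k, fm i = 0).card := by
  rw [countA, length_filter_card]
  simp only [decide_eq_true_eq]

/- ### Main lower-bound lemma -/

lemma key (bs : List (Finset (Fin 6))) (hf : Feasible bs) (h2 : countA bs = 2) :
    181 ≤ obj bs := by
  obtain ⟨hpart, hfam, hsz⟩ := hf
  set n := bs.length with hn
  set W : Fin n → ℕ := fun k => ∑ i ∈ bs.get k, wt i with hW
  have hWdef : ∀ k : Fin n, W k = ∑ i ∈ bs.get k, wt i := fun _ => rfl
  have hget : ∀ k : Fin n, bs.get k ∈ bs := fun k => bs.get_mem k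
  set T : Finset (Fin n) :=
    Finset.univ.filter (fun k : Fin n => ∃ i ∈ bs.get k, fm i = 0) with hTdef
  have hTcard : T.card = 2 := by rw [← countA_eq]; exact h2
  have hmemT : ∀ k : Fin n, k ∈ T ↔ ∃ i ∈ bs.get k, fm i = 0 := by
    intro k; simp [hTdef]
  -- distinct batches are disjoint
  have hdis : ∀ k l : Fin n, k ≠ l → Disjoint (bs.get k) (bs.get l) := by
    intro k l hkl
    rw [Finset.disjoint_left]
    intro i hik hil
    obtain ⟨m, _, hu⟩ := hpart i
    exact hkl ((hu k hik).trans (hu l hil).symm)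
  -- batches in T consist entirely of family-A jobs
  have hallA : ∀ k ∈ T, ∀ i ∈ bs.get k, fm i = 0 := by
    intro k hk i hi
    obtain ⟨j, hj, hfmj⟩ := (hmemT k).mp hk
    have := hfam (bs.get k) (hget k) i hi j hj
    rw [this, hfmj]
  -- batches outside T have no family-A jobs
  have hallB : ∀ k : Fin n, k ∉ T → ∀ i ∈ bs.get k, fm i ≠ 0 := by
    intro k hk i hi hfi
    exact hk ((hmemT k).mpr ⟨i, hi, hfi⟩)
  obtain ⟨k₁, k₂, hk12, hTeq⟩ := Finset.card_eq_two.mp hTcard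
  have hk1T : k₁ ∈ T := by rw [hTeq]; simp
  have hk2T : k₂ ∈ T := by rw [hTeq]; simp
  -- the two A-batches cover all A jobs
  have hcov : ∀ i : Fin 6, fm i = 0 → i ∈ bs.get k₁ ∪ bs.get k₂ := by
    intro i hfi
    obtain ⟨k, hk, _⟩ := hpart i
    have hkT : k ∈ T := (hmemT k).mpr ⟨i, hk, hfi⟩
    rw [hTeq] at hkT
    rcases Finset.mem_insert.mp hkT with h | h
    · subst h; exact Finset.mem_union_left _ hk
    · rw [Finset.mem_singleton] at h; subst h; exact Finset.mem_union_right _ hk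
  obtain ⟨hA1, hA2, hA12⟩ := Apair (bs.get k₁) (bs.get k₂) (hdis _ _ hk12)
    (hallA _ hk1T) (hallA _ hk2T) hcov
    (hsz _ (hget k₁)) (hsz _ (hget k₂))
  -- every batch weighs at most 31
  have hW31 : ∀ k : Fin n, W k ≤ 31 := by
    intro k
    by_cases hk : k ∈ T
    · rw [hTeq] at hk
      rcases Finset.mem_insert.mp hk with h | h
      · subst h; exact hA1
      · rw [Finset.mem_singleton] at h; subst h; exact hA2
    · exact le_trans (Bwt' _ (hallB k hk)) (by norm_num)
  -- any two distinct batches weigh at most 61 together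
  have hWpair : ∀ k l : Fin n, k ≠ l → W k + W l ≤ 61 := by
    intro k l hkl
    by_cases hk : k ∈ T <;> by_cases hl : l ∈ T
    · rw [hTeq, Finset.mem_insert, Finset.mem_singleton] at hk hl
      rcases hk with h | h <;> rcases hl with h' | h' <;> subst h <;> subst h'
      · exact absurd rfl hkl
      · have := hWdef k; have := hWdef l; omega
      · have := hWdef k; have := hWdef l; omega
      · exact absurd rfl hkl
    · have := Bwt' _ (hallB l hl); have := hW31 k; have := hWdef l; omega
    · have := Bwt' _ (hallB k hk); have := hW31 l; have := hWdef k; omega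
    · have := BBwt _ _ (hdis _ _ hkl) (hallB k hk) (hallB l hl)
      have := hWdef k; have := hWdef l; omega
  -- total weight
  have htot : ∑ k : Fin n, W k = 91 := by
    have : ∑ k : Fin n, W k = ∑ i : Fin 6, wt i := by
      calc ∑ k : Fin n, W k
          = ∑ k : Fin n, ∑ i : Fin 6, if i ∈ bs.get k then wt i else 0 := by
            refine Finset.sum_congr rfl fun k _ => ?_
            rw [Finset.sum_ite_mem, Finset.univ_inter]
        _ = ∑ i : Fin 6, ∑ k : Fin n, if i ∈ bs.get k then wt i else 0 := Finset.sum_comm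
        _ = ∑ i : Fin 6, wt i := by
            refine Finset.sum_congr rfl fun i _ => ?_
            obtain ⟨k, hk, hu⟩ := hpart i
            rw [Finset.sum_eq_single k]
            · rw [if_pos hk]
            · intro l _ hlk
              rw [if_neg fun h => hlk (hu l h)]
            · intro h; exact absurd (Finset.mem_univ k) h
    rw [this]; decide
  -- at least three batches
  have hk4 : ∃ k : Fin n, k ∉ T := by
    obtain ⟨k, hk, _⟩ := hpart 4
    refine ⟨k, fun hkT => ?_⟩
    have := hallA k hkT 4 hk
    simp [fm] at this
  obtain ⟨k₄, hk4T⟩ := hk4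
  have hne1 : k₄ ≠ k₁ := fun h => hk4T (h ▸ hk1T)
  have hne2 : k₄ ≠ k₂ := fun h => hk4T (h ▸ hk2T)
  have h3n : 3 ≤ n := by
    have hcard : ({k₁, k₂, k₄} : Finset (Fin n)).card = 3 := by
      rw [Finset.card_insert_of_notMem (by simp [hk12, hne1.symm]),
        Finset.card_insert_of_notMem (by simp [hne2.symm]), Finset.card_singleton]
    have := Finset.card_le_univ ({k₁, k₂, k₄} : Finset (Fin n))
    simpa [hcard] using this
  set i0 : Fin n := ⟨0, by omega⟩ with hi0
  set i1 : Fin n := ⟨1, by omega⟩ with hi1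
  have hi01 : i0 ≠ i1 := by simp [hi0, hi1, Fin.ext_iff]
  -- pointwise inequality
  have hpt : ∀ k : Fin n, 3 * W k ≤
      (k.1 + 1) * W k + ((if k = i0 then 2 * W k else 0) + (if k = i1 then W k else 0)) := by
    intro k
    by_cases h0 : k = i0
    · subst h0
      rw [if_pos rfl, if_neg hi01]
      simp [hi0]; omega
    · by_cases h1 : k = i1
      · subst h1
        rw [if_neg (by exact fun h => h0 h), if_pos rfl]
        simp [hi1]; ring_nf; omega
      · rw [if_neg h0, if_neg h1]
        have hk0 : k.1 ≠ 0 := fun h => h0 (by rw [hi0]; exact Fin.ext h)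
        have hk1 : k.1 ≠ 1 := fun h => h1 (by rw [hi1]; exact Fin.ext h)
        have : 3 ≤ k.1 + 1 := by omega
        have := Nat.mul_le_mul_right (W k) this
        omega
  have hsum : ∑ k : Fin n, 3 * W k ≤
      (∑ k : Fin n, (k.1 + 1) * W k) +
        ((∑ k : Fin n, if k = i0 then 2 * W k else 0) +
         (∑ k : Fin n, if k = i1 then W k else 0)) := by
    rw [← Finset.sum_add_distrib, ← Finset.sum_add_distrib]
    exact Finset.sum_le_sum fun k _ => hpt k
  rw [← Finset.mul_sum, htot, Finset.sum_ite_eq' Finset.univ i0,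
    Finset.sum_ite_eq' Finset.univ i1] at hsum
  simp only [Finset.mem_univ, if_pos] at hsum
  have hobj : obj bs = ∑ k : Fin n, (k.1 + 1) * W k := rfl
  have h61 : W i0 + W i1 ≤ 61 := hWpair i0 i1 hi01
  have h31 : W i0 ≤ 31 := hW31 i0
  omega

theorem bin_packing_first_is_suboptimal :
    (∀ bs : List (Finset (Fin 6)), Feasible bs → 2 ≤ countA bs) ∧
    (∀ bs : List (Finset (Fin 6)), Feasible bs → countA bs = 2 → 181 ≤ obj bs) ∧
    (∃ bs : List (Finset (Fin 6)), Feasible bs ∧ obj bs = 173) := by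
  refine ⟨?_, key, ?_⟩
  · intro bs hf
    obtain ⟨hpart, hfam, hsz⟩ := hf
    by_contra h
    push_neg at h
    rw [countA_eq] at h
    set T : Finset (Fin bs.length) :=
      Finset.univ.filter (fun k => ∃ i ∈ bs.get k, fm i = 0) with hTdef
    have hle1 : T.card ≤ 1 := by omega
    have hmemT : ∀ (j : Fin 6), fm j = 0 → ∀ k, j ∈ bs.get k → k ∈ T := by
      intro j hj k hk
      simp only [hTdef, Finset.mem_filter, Finset.mem_univ, true_and]
      exact ⟨j, hk, hj⟩
    obtain ⟨k0, hk0, hu0⟩ := hpart 0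
    obtain ⟨k1, hk1, _⟩ := hpart 1
    obtain ⟨k2, hk2, _⟩ := hpart 2
    obtain ⟨k3, hk3, _⟩ := hpart 3
    have e1 : k1 = k0 := Finset.card_le_one.mp hle1 _
      (hmemT 1 (by decide) _ hk1) _ (hmemT 0 (by decide) _ hk0)
    have e2 : k2 = k0 := Finset.card_le_one.mp hle1 _
      (hmemT 2 (by decide) _ hk2) _ (hmemT 0 (by decide) _ hk0)
    have e3 : k3 = k0 := Finset.card_le_one.mp hle1 _
      (hmemT 3 (by decide) _ hk3) _ (hmemT 0 (by decide) _ hk0)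
    rw [e1] at hk1; rw [e2] at hk2; rw [e3] at hk3
    exact bigA _ hk0 hk1 hk2 hk3 (hsz _ (bs.get_mem k0))
  · refine ⟨[{0,1}, {4,5}, {2}, {3}], ⟨?_, ?_, ?_⟩, ?_⟩
    · simp only [ExistsUnique]; decide
    · decide
    · decide
    · decide
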